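/- Let f : [0,1]^m → ℝ≥0 be an MLC function, let f̂ = conv(f), and let x̂ ∈ [0,1]^m. Then there exist k ∈ ℕ, weights λ_1, …, λ_k ≥ 0 with Σ_{i=1}^k λ_i = 1, and points x^(1), …, x^(k) ∈ [0,1]^m such that f(x^(i)) = f̂(x^(i)) for all i ∈ [k], x̂ = Σ_{i=1}^k λ_i x^(i), and f̂(x̂) = Σ_{i=1}^k λ_i f(x^(i)). -/

import Mathlib

noncomputable section

/-- The unit cube `[0,1]^m` in `Fin m → ℝ`. -/
def cube (m : ℕ) : Set (Fin m → ℝ) := Set.Icc 0 1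

/-- The lower limit of `f` at `x₀` relative to the domain `D` (in the extended reals). -/
def lowerLim {E : Type*} [SeminormedAddCommGroup E] (D : Set E) (f : E → ℝ) (x₀ : E) : EReal :=
  ⨆ δ : {δ : ℝ // 0 < δ}, ⨅ x : {x : E // x ∈ D ∧ ‖x - x₀‖ ≤ δ.1}, (f x.1 : EReal)

/-- `f` is lower-continuous on `D`. -/
def LowerContOn {E : Type*} [SeminormedAddCommGroup E] (D : Set E) (f : E → ℝ) : Prop :=
  ∀ x₀ ∈ D, lowerLim D f x₀ = (f x₀ : EReal)

/-- The epigraph of `f` relative to the domain `D`. -/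
def epigraph {E : Type*} (D : Set E) (f : E → ℝ) : Set (E × ℝ) :=
  {q | q.1 ∈ D ∧ f q.1 ≤ q.2}

/-- The convex hull of a function: `conv(f)(x) = inf {y : (x,y) ∈ conv(epi f)}`. -/
def funConvHull {E : Type*} [AddCommGroup E] [Module ℝ E] (D : Set E) (f : E → ℝ) : E → ℝ :=
  fun x => sInf {y : ℝ | (x, y) ∈ convexHull ℝ (epigraph D f)}

-- padding sum lemma
lemma sum_pad {M : Type*} [AddCommMonoid M] {c n : ℕ} (h : c ≤ n) (φ : Fin c → M) :
    (∑ j : Fin n, if hj : (j : ℕ) < c then φ ⟨j, hj⟩ else 0) = ∑ i : Fin c, φ i := by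
  rw [Fin.sum_univ_eq_sum_range (fun j => if hj : j < c then φ ⟨j, hj⟩ else 0) n,
    ← Finset.sum_subset (Finset.range_subset_range.2 h)
      (fun x _ hx => dif_neg (by simpa using hx)),
    Finset.sum_range (fun j => if hj : j < c then φ ⟨j, hj⟩ else 0)]
  refine Finset.sum_congr rfl fun i _ => ?_
  rw [dif_pos i.isLt]

-- lower semicontinuity from LowerContOn
lemma lsc_of_lc {E : Type*} [SeminormedAddCommGroup E] {D : Set E} {f : E → ℝ}
    (hf : LowerContOn D f) : LowerSemicontinuousOn f D := by
  intro x₀ hx₀ c hc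
  have h := hf x₀ hx₀
  have hc' : (c : EReal) < lowerLim D f x₀ := by rw [h]; exact_mod_cast hc
  rw [lowerLim, lt_iSup_iff] at hc'
  obtain ⟨⟨δ, hδ⟩, hδ2⟩ := hc'
  have hball : {x : E | ‖x - x₀‖ ≤ δ} ∈ nhds x₀ := by
    have : {x : E | ‖x - x₀‖ ≤ δ} = Metric.closedBall x₀ δ := by
      ext x; simp [Metric.closedBall, dist_eq_norm]
    rw [this]
    exact Metric.closedBall_mem_nhds x₀ hδ
  filter_upwards [nhdsWithin_le_nhds hball, eventually_mem_nhdsWithin] with x hx hxD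
  have h2 : (c : EReal) < (f x : EReal) := lt_of_lt_of_le hδ2 (iInf_le _ (⟨x, hxD, hx⟩ : {x : E // x ∈ D ∧ ‖x - x₀‖ ≤ δ}))
  exact_mod_cast h2

/-- If `f : [0,1]^m → ℝ≥0` is MLC with convex hull `f̂` and
`x̂ ∈ [0,1]^m`, then `x̂` is a convex combination of points where `f` and `f̂`
agree, and `f̂ x̂` is the corresponding convex combination of the values of `f`. -/
theorem stmt3 (m : ℕ) (f : (Fin m → ℝ) → ℝ) (hf_nonneg : ∀ x ∈ cube m, 0 ≤ f x)
    (hf_mono : MonotoneOn f (cube m)) (hf_lc : LowerContOn (cube m) f)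
    (xhat : Fin m → ℝ) (hxhat : xhat ∈ cube m) :
    ∃ (k : ℕ) (lam : Fin k → ℝ) (xs : Fin k → (Fin m → ℝ)),
      (∀ i, 0 ≤ lam i) ∧ (∑ i, lam i = 1) ∧
      (∀ i, xs i ∈ cube m) ∧
      (∀ i, f (xs i) = funConvHull (cube m) f (xs i)) ∧
      xhat = ∑ i, lam i • xs i ∧
      funConvHull (cube m) f xhat = ∑ i, lam i * f (xs i) := by
  classical
  set K := cube m with hK
  set H := convexHull ℝ (epigraph K f) with hH
  -- basic facts about the hull
  have hKconv : Convex ℝ K := convex_Icc _ _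
  have h1 : H ⊆ K ×ˢ Set.Ici (0 : ℝ) :=
    convexHull_min (fun q hq => ⟨hq.1, le_trans (hf_nonneg _ hq.1) hq.2⟩)
      (hKconv.prod (convex_Ici 0))
  have h2 : ∀ x ∈ K, (x, f x) ∈ H := fun x hx => subset_convexHull ℝ _ ⟨hx, le_refl _⟩
  have h3 : ∀ x : Fin m → ℝ, BddBelow {y : ℝ | (x, y) ∈ H} :=
    fun x => ⟨0, fun y hy => (h1 hy).2⟩
  have h4 : ∀ x ∈ K, funConvHull K f x ≤ f x := fun x hx => csInf_le (h3 x) (h2 x hx)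
  -- convex combinations of hull points are in the hull
  have h5 : ∀ (lam : Fin (m + 2) → ℝ) (z : Fin (m + 2) → (Fin m → ℝ) × ℝ),
      (∀ i, 0 ≤ lam i) → (∑ i, lam i) = 1 → (∀ i, z i ∈ H) →
      ((∑ i, lam i • (z i).1, ∑ i, lam i * (z i).2) : (Fin m → ℝ) × ℝ) ∈ H := by
    intro lam z hl hs hz
    have : (∑ i, lam i • z i) ∈ H :=
      (convex_convexHull ℝ _).sum_mem (fun i _ => hl i) hs (fun i _ => hz i)
    have heq : (∑ i, lam i • z i) =
        ((∑ i, lam i • (z i).1, ∑ i, lam i * (z i).2) : (Fin m → ℝ) × ℝ) := by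
      rw [Prod.ext_iff, Prod.fst_sum, Prod.snd_sum]
      refine ⟨Finset.sum_congr rfl fun i _ => Prod.smul_fst _ _,
        Finset.sum_congr rfl fun i _ => ?_⟩
      rw [Prod.smul_snd, smul_eq_mul]
    rwa [heq] at this
  have h6 : LowerSemicontinuousOn f K := lsc_of_lc hf_lc
  -- the feasible set and objective
  set P := (Fin (m + 2) → ℝ) × (Fin (m + 2) → (Fin m → ℝ)) with hP
  set S : Set P := {p | (∀ i, 0 ≤ p.1 i) ∧ (∑ i, p.1 i) = 1 ∧ (∀ i, p.2 i ∈ K) ∧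
      (∑ i, p.1 i • p.2 i) = xhat} with hS
  set g : P → ℝ := fun p => ∑ i, p.1 i * f (p.2 i) with hg
  -- per-term lower semicontinuity
  have h7 : ∀ p ∈ S, ∀ i : Fin (m + 2), ∀ ε : ℝ, 0 < ε →
      ∀ᶠ q in nhdsWithin p S, p.1 i * f (p.2 i) - ε < q.1 i * f (q.2 i) := by
    intro p hp i ε hε
    have hbK : p.2 i ∈ K := hp.2.2.1 i
    set a := p.1 i with ha
    set b := f (p.2 i) with hb
    have ha0 : 0 ≤ a := hp.1 i
    have hb0 : 0 ≤ b := hf_nonneg _ hbK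
    have hc1 : Continuous fun q : P => q.1 i := (continuous_apply i).comp continuous_fst
    have htends2 : Filter.Tendsto (fun q : P => q.2 i) (nhdsWithin p S)
        (nhdsWithin (p.2 i) K) := by
      rw [tendsto_nhdsWithin_iff]
      exact ⟨(((continuous_apply i).comp continuous_snd).tendsto p).mono_left nhdsWithin_le_nhds,
        eventually_mem_nhdsWithin.mono fun q hq => hq.2.2.1 i⟩
    have hnn : ∀ᶠ q in nhdsWithin p S, 0 ≤ q.1 i ∧ 0 ≤ f (q.2 i) :=
      eventually_mem_nhdsWithin.mono fun q hq => ⟨hq.1 i, hf_nonneg _ (hq.2.2.1 i)⟩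
    rcases eq_or_lt_of_le hb0 with hb' | hb'
    · filter_upwards [hnn] with q hq
      have hab : a * b = 0 := by rw [← hb', mul_zero]
      have := mul_nonneg hq.1 hq.2
      linarith
    · set ε₁ := ε/(2*b) with hε₁
      set ε₂ := min (b/2) (ε/(2*(a+1))) with hε₂
      have hε₁0 : 0 < ε₁ := by positivity
      have hε₂0 : 0 < ε₂ := lt_min (by positivity) (by positivity)
      have hevt1 : ∀ᶠ q in nhdsWithin p S, a - ε₁ < q.1 i :=
        ((hc1.tendsto p).mono_left nhdsWithin_le_nhds).eventually
          (eventually_gt_nhds (by linarith))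
      have hevt2 : ∀ᶠ q in nhdsWithin p S, b - ε₂ < f (q.2 i) :=
        htends2.eventually (h6 _ hbK _ (by linarith))
      filter_upwards [hnn, hevt1, hevt2] with q hq h1' h2'
      have hq1 := hq.1
      have hq2 := hq.2
      have hεb : ε₁ * b = ε/2 := by
        rw [hε₁]; field_simp
      have h2b : ε₂ ≤ b/2 := min_le_left _ _
      have h2a : ε₂ ≤ ε/(2*(a+1)) := min_le_right _ _
      have hbe : 0 ≤ b - ε₂ := by linarith
      have step1 : (a - ε₁) * (b - ε₂) ≤ q.1 i * f (q.2 i) := by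
        rcases le_or_gt (a - ε₁) 0 with h | h
        · nlinarith [mul_nonneg hq1 hq2]
        · exact mul_le_mul h1'.le h2'.le hbe hq1
      have h3 : a * (ε/(2*(a+1))) ≤ ε/2 := by
        rw [mul_div_assoc', div_le_div_iff₀ (by positivity) (by norm_num)]
        nlinarith
      have haε : a * ε₂ ≤ ε/2 := le_trans (mul_le_mul_of_nonneg_left h2a ha0) h3
      have step2 : a*b - ε < (a - ε₁)*(b - ε₂) := by
        nlinarith [mul_pos hε₁0 hε₂0]
      linarith
  -- lower semicontinuity of g on S
  have h8 : ∀ p ∈ S, ∀ c : ℝ, c < g p → ∀ᶠ q in nhdsWithin p S, c < g q := by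
    intro p hp c hc
    have hnε : (0:ℝ) < (g p - c)/(m+2) := div_pos (sub_pos.2 hc) (by positivity)
    have hev : ∀ᶠ q in nhdsWithin p S,
        ∀ i, p.1 i * f (p.2 i) - (g p - c)/(m+2) < q.1 i * f (q.2 i) :=
      Filter.eventually_all.2 fun i => h7 p hp i _ hnε
    filter_upwards [hev] with q hq
    have hsum : (∑ i : Fin (m+2), (p.1 i * f (p.2 i) - (g p - c)/(m+2))) <
        ∑ i, q.1 i * f (q.2 i) :=
      Finset.sum_lt_sum_of_nonempty Finset.univ_nonempty (fun i _ => hq i)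
    have heq : (∑ i : Fin (m+2), (p.1 i * f (p.2 i) - (g p - c)/(m+2))) = c := by
      rw [Finset.sum_sub_distrib, Finset.sum_const, Finset.card_univ, Fintype.card_fin]
      have h' : (∑ i, p.1 i * f (p.2 i)) = g p := rfl
      rw [h', nsmul_eq_mul]
      have hne : ((m:ℝ)+2) ≠ 0 := by positivity
      push_cast
      field_simp
      ring
    have : c < ∑ i, q.1 i * f (q.2 i) := heq ▸ hsum
    exact this
  -- S is compact and nonempty
  have hSclosed : IsClosed S := by
    have hrw : S = (⋂ i, {p : P | 0 ≤ p.1 i}) ∩ ({p : P | (∑ i, p.1 i) = 1} ∩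
        ((⋂ i, {p : P | p.2 i ∈ K}) ∩ {p : P | (∑ i, p.1 i • p.2 i) = xhat})) := by
      ext p
      simp only [hS, Set.mem_setOf_eq, Set.mem_inter_iff, Set.mem_iInter]
    have c1 : ∀ i : Fin (m+2), Continuous fun p : P => p.1 i :=
      fun i => (continuous_apply i).comp continuous_fst
    have c2 : ∀ i : Fin (m+2), Continuous fun p : P => p.2 i :=
      fun i => (continuous_apply i).comp continuous_snd
    rw [hrw]
    refine (isClosed_iInter fun i => isClosed_le continuous_const (c1 i)).inter
      ((isClosed_eq (continuous_finset_sum _ fun i _ => c1 i) continuous_const).inter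
        ((isClosed_iInter fun i => ?_).inter
          (isClosed_eq (continuous_finset_sum _ fun i _ => (c1 i).smul (c2 i))
            continuous_const)))
    exact IsClosed.preimage (c2 i) isClosed_Icc
  have hScomp : IsCompact S := by
    have hsub : S ⊆ (Set.Icc (0 : Fin (m+2) → ℝ) 1) ×ˢ
        (Set.Icc (0 : Fin (m+2) → Fin m → ℝ) 1) := by
      intro p hp
      refine ⟨⟨fun i => hp.1 i, fun i => ?_⟩,
        ⟨fun i => (hp.2.2.1 i).1, fun i => (hp.2.2.1 i).2⟩⟩
      calc p.1 i ≤ ∑ j, p.1 j :=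
            Finset.single_le_sum (fun j _ => hp.1 j) (Finset.mem_univ i)
        _ = 1 := hp.2.1
    exact (isCompact_Icc.prod isCompact_Icc).of_isClosed_subset hSclosed hsub
  have hSne : S.Nonempty := by
    have hcard : (∑ _i : Fin (m+2), ((m:ℝ)+2)⁻¹) = 1 := by
      rw [Finset.sum_const, Finset.card_univ, Fintype.card_fin, nsmul_eq_mul]
      push_cast
      field_simp
    refine ⟨⟨fun _ => ((m:ℝ)+2)⁻¹, fun _ => xhat⟩, fun i => by positivity, hcard,
      fun i => hxhat, ?_⟩
    rw [← Finset.sum_smul, hcard, one_smul]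
  -- minimizer of g on S
  obtain ⟨pstar, hpstar, hmin⟩ : ∃ p ∈ S, ∀ q ∈ S, g p ≤ g q := by
    have hgnonneg : ∀ p ∈ S, 0 ≤ g p := fun p hp =>
      Finset.sum_nonneg fun i _ => mul_nonneg (hp.1 i) (hf_nonneg _ (hp.2.2.1 i))
    have hAne : (g '' S).Nonempty := hSne.image g
    have hAbdd : BddBelow (g '' S) := by
      refine ⟨0, ?_⟩
      rintro y ⟨p, hp, rfl⟩
      exact hgnonneg p hp
    set A := g '' S with hA
    set a := sInf A with haa
    have hu : ∀ k : ℕ, ∃ p, p ∈ S ∧ g p < a + 1/(k+1) := by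
      intro k
      obtain ⟨y, hyA, hlt⟩ := exists_lt_of_csInf_lt hAne
        (lt_add_of_pos_right a (show (0:ℝ) < 1/(k+1) by positivity))
      obtain ⟨p, hp, rfl⟩ := hyA
      exact ⟨p, hp, hlt⟩
    choose u hu1 hu2 using hu
    obtain ⟨p, hpS, φ, hφ, hconv⟩ := hScomp.tendsto_subseq hu1
    have htend : Filter.Tendsto (u ∘ φ) Filter.atTop (nhdsWithin p S) :=
      tendsto_nhdsWithin_iff.2 ⟨hconv, Filter.Eventually.of_forall fun k => hu1 _⟩
    have hga : Filter.Tendsto (fun k => g (u (φ k))) Filter.atTop (nhds a) := by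
      have h0 : Filter.Tendsto (fun k : ℕ => a + 1/(k+1)) Filter.atTop (nhds a) := by
        simpa using (tendsto_const_nhds : Filter.Tendsto (fun _ : ℕ => a) Filter.atTop (nhds a)).add tendsto_one_div_add_atTop_nhds_zero_nat
      refine tendsto_of_tendsto_of_tendsto_of_le_of_le tendsto_const_nhds h0
        (fun k => csInf_le hAbdd ⟨u (φ k), hu1 _, rfl⟩) (fun k => ?_)
      refine le_of_lt ((hu2 (φ k)).trans_le ((add_le_add_iff_left a).2 ?_))
      have hk : (k:ℝ) + 1 ≤ (φ k : ℝ) + 1 := by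
        exact_mod_cast Nat.succ_le_succ hφ.le_apply
      exact one_div_le_one_div_of_le (by positivity) hk
    refine ⟨p, hpS, ?_⟩
    have hpa : g p ≤ a := by
      by_contra hcon
      push_neg at hcon
      have hc2 : (a + g p)/2 < g p := by linarith
      have hE := htend.eventually (h8 p hpS _ hc2)
      have : (a + g p)/2 ≤ a := ge_of_tendsto hga (hE.mono fun k h => h.le)
      linarith
    intro q hq
    exact hpa.trans (csInf_le hAbdd ⟨q, hq, rfl⟩)
  -- any point of the hull above xhat dominates some element of S
  have h12 : ∀ y : ℝ, (xhat, y) ∈ H → ∃ p ∈ S, g p ≤ y := by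
    intro y hy
    obtain ⟨ι, hι, z, w, hrange, haff, hwpos, hwsum, hzsum⟩ :=
      eq_pos_convex_span_of_mem_convexHull hy
    have hcard : Fintype.card ι ≤ m + 2 := by
      have hle1 := haff.card_le_finrank_succ
      have hle2 : Module.finrank ℝ (vectorSpan ℝ (Set.range z)) ≤
          Module.finrank ℝ ((Fin m → ℝ) × ℝ) := Submodule.finrank_le _
      have hfr : Module.finrank ℝ ((Fin m → ℝ) × ℝ) = m + 1 := by simp
      omega
    set c := Fintype.card ι with hcdef
    set e := Fintype.equivFin ι with hedef
    set lam : Fin (m+2) → ℝ := fun j => if hj : (j:ℕ) < c then w (e.symm ⟨j, hj⟩) else 0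
      with hlamdef
    set xs : Fin (m+2) → (Fin m → ℝ) := fun j =>
      if hj : (j:ℕ) < c then (z (e.symm ⟨j, hj⟩)).1 else xhat with hxsdef
    have hfst : (∑ i, w i • (z i).1) = xhat := by
      have := congrArg Prod.fst hzsum
      rw [Prod.fst_sum] at this
      simpa using this
    have hsnd : (∑ i, w i * (z i).2) = y := by
      have := congrArg Prod.snd hzsum
      rw [Prod.snd_sum] at this
      simpa [smul_eq_mul] using this
    have hzepi : ∀ i : ι, z i ∈ epigraph K f := fun i => hrange (Set.mem_range_self i)
    refine ⟨⟨lam, xs⟩, ⟨?_, ?_, ?_, ?_⟩, ?_⟩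
    · intro j
      rw [hlamdef]
      dsimp only
      split
      · exact (hwpos _).le
      · exact le_refl 0
    · show (∑ j, lam j) = 1
      rw [hlamdef]
      rw [sum_pad hcard (fun i => w (e.symm i))]
      rw [← hwsum]
      exact Fintype.sum_equiv e.symm _ _ (fun i => rfl)
    · intro j
      rw [hxsdef]
      dsimp only
      split
      · exact (hzepi _).1
      · exact hxhat
    · show (∑ j, lam j • xs j) = xhat
      have hterm : ∀ j : Fin (m+2), lam j • xs j =
          if hj : (j:ℕ) < c then w (e.symm ⟨j, hj⟩) • (z (e.symm ⟨j, hj⟩)).1 else 0 := by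
        intro j
        rw [hlamdef, hxsdef]
        dsimp only
        split
        · rfl
        · rw [zero_smul]
      rw [Finset.sum_congr rfl fun j _ => hterm j,
        sum_pad hcard (fun i => w (e.symm i) • (z (e.symm i)).1), ← hfst]
      exact Fintype.sum_equiv e.symm _ _ (fun i => rfl)
    · show (∑ j, lam j * f (xs j)) ≤ y
      have hterm : ∀ j : Fin (m+2), lam j * f (xs j) =
          if hj : (j:ℕ) < c then w (e.symm ⟨j, hj⟩) * f ((z (e.symm ⟨j, hj⟩)).1) else 0 := by
        intro j
        rw [hlamdef, hxsdef]
        dsimp only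
        split
        · rfl
        · rw [zero_mul]
      rw [Finset.sum_congr rfl fun j _ => hterm j,
        sum_pad hcard (fun i => w (e.symm i) * f ((z (e.symm i)).1))]
      have heq : (∑ i : Fin c, w (e.symm i) * f ((z (e.symm i)).1)) =
          ∑ i : ι, w i * f ((z i).1) := Fintype.sum_equiv e.symm _ _ (fun i => rfl)
      rw [heq, ← hsnd]
      refine Finset.sum_le_sum fun i _ => ?_
      exact mul_le_mul_of_nonneg_left (hzepi i).2 (hwpos i).le
  have h11 : ∀ p ∈ S, funConvHull K f xhat ≤ g p := by
    intro p hp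
    refine csInf_le (h3 xhat) ?_
    have := h5 p.1 (fun i => (p.2 i, f (p.2 i))) hp.1 hp.2.1 (fun i => h2 _ (hp.2.2.1 i))
    rw [hp.2.2.2] at this
    exact this
  have h13 : funConvHull K f xhat = g pstar := by
    refine le_antisymm (h11 pstar hpstar) ?_
    refine le_csInf ⟨f xhat, h2 xhat hxhat⟩ ?_
    intro y hy
    obtain ⟨p, hp, hgp⟩ := h12 y hy
    exact (hmin p hp).trans hgp
  -- at the minimizer, positive-weight points satisfy f = conv f
  have h14 : ∀ i : Fin (m + 2), pstar.1 i ≠ 0 → f (pstar.2 i) = funConvHull K f (pstar.2 i) := by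
    intro i hi
    refine le_antisymm ?_ (h4 _ (hpstar.2.2.1 i))
    by_contra hcon
    push_neg at hcon
    have hne : {y : ℝ | (pstar.2 i, y) ∈ H}.Nonempty := ⟨f _, h2 _ (hpstar.2.2.1 i)⟩
    obtain ⟨y, hyH, hylt⟩ := exists_lt_of_csInf_lt hne hcon
    set z : Fin (m+2) → (Fin m → ℝ) × ℝ :=
      fun j => (pstar.2 j, if j = i then y else f (pstar.2 j)) with hzdef
    have hzH : ∀ j, z j ∈ H := by
      intro j
      by_cases hji : j = i
      · subst hji
        simpa [hzdef] using hyH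
      · simpa [hzdef, hji] using h2 _ (hpstar.2.2.1 j)
    have hmem := h5 pstar.1 z hpstar.1 hpstar.2.1 hzH
    have hfst : (∑ j, pstar.1 j • (z j).1) = xhat := by
      simpa [hzdef] using hpstar.2.2.2
    rw [hfst] at hmem
    have hle : funConvHull K f xhat ≤ ∑ j, pstar.1 j * (z j).2 := csInf_le (h3 xhat) hmem
    rw [h13] at hle
    have hstrict : (∑ j, pstar.1 j * (z j).2) < g pstar := by
      refine Finset.sum_lt_sum (fun j _ => ?_) ⟨i, Finset.mem_univ i, ?_⟩
      · by_cases hji : j = i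
        · subst hji
          simp only [hzdef, if_pos rfl]
          exact mul_le_mul_of_nonneg_left hylt.le (hpstar.1 j)
        · simp [hzdef, hji]
      · have hpos : 0 < pstar.1 i := lt_of_le_of_ne (hpstar.1 i) (Ne.symm hi)
        simp only [hzdef, if_pos rfl]
        exact mul_lt_mul_of_pos_left hylt hpos
    linarith
  -- nonvanishing weight exists
  obtain ⟨i₀, hi₀⟩ : ∃ i, pstar.1 i ≠ 0 := by
    by_contra hcon
    push_neg at hcon
    have : (∑ i, pstar.1 i) = 0 := Finset.sum_eq_zero fun i _ => hcon i
    rw [hpstar.2.1] at this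
    norm_num at this
  -- assemble the answer
  refine ⟨m + 2, pstar.1, fun i => if pstar.1 i = 0 then pstar.2 i₀ else pstar.2 i,
    hpstar.1, hpstar.2.1, ?_, ?_, ?_, ?_⟩
  · intro i
    by_cases h : pstar.1 i = 0 <;> simp [h, hpstar.2.2.1 i, hpstar.2.2.1 i₀]
  · intro i
    by_cases h : pstar.1 i = 0
    · simpa [h] using h14 i₀ hi₀
    · simpa [h] using h14 i h
  · rw [← hpstar.2.2.2]
    refine Finset.sum_congr rfl fun i _ => ?_
    by_cases h : pstar.1 i = 0 <;> simp [h]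
  · rw [h13]
    refine Finset.sum_congr rfl fun i _ => ?_
    by_cases h : pstar.1 i = 0 <;> simp [h]

end
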